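/- (Exact-arithmetic convergence of the Newton iteration for the matrix sign function.) Let A be an n×n complex matrix with A = V D V⁻¹, where V is invertible and D is diagonal with every diagonal entry having nonzero real part and lying in C^±_α for some α ∈ (0,1). Let S = V·sgn(D)·V⁻¹, where sgn(D) is the diagonal matrix whose i-th entry is +1 if Re(D_ii) > 0 and −1 if Re(D_ii) < 0. Define the Newton iterates A_0 = A, A_{k+1} = (A_k + A_k⁻¹)/2. Then every iterate A_k is invertible, and for every N ≥ 0: ‖A_N − S‖ ≤ (4·α^{2^N}/(1 − α^{2^N}))·‖V‖·‖V⁻¹‖. -/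

import Mathlib

/-- The Euclidean norm of a vector in `ℂⁿ`. -/
noncomputable def euclidEnorm {n : ℕ} (v : Fin n → ℂ) : ℝ :=
  Real.sqrt (∑ i, ‖v i‖ ^ 2)

/-- The spectral norm (`ℓ² → ℓ²` operator norm) of a complex matrix:
the supremum of `‖Av‖` over Euclidean-unit vectors `v`. -/
noncomputable def specNorm {m n : ℕ} (A : Matrix (Fin m) (Fin n) ℂ) : ℝ :=
  sSup {s | ∃ v : Fin n → ℂ, euclidEnorm v = 1 ∧ s = euclidEnorm (A.mulVec v)}

/-- The `ε`-pseudospectrum of a square complex matrix `M`: the set of `z ∈ ℂ` such that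
`z·I − M` is not invertible or `‖(z·I − M)⁻¹‖ > 1/ε`. -/
noncomputable def pseudospectrum {m : ℕ} (ε : ℝ) (M : Matrix (Fin m) (Fin m) ℂ) : Set ℂ :=
  {z | ¬ IsUnit (z • (1 : Matrix (Fin m) (Fin m) ℂ) - M) ∨
    1 / ε < specNorm (z • (1 : Matrix (Fin m) (Fin m) ℂ) - M)⁻¹}

/-- The Apollonian region `C⁺_α = { z : |1 - z| ≤ α |1 + z| }`. -/
def Cplus (α : ℝ) : Set ℂ := {z | ‖1 - z‖ ≤ α * ‖1 + z‖}

/-- The Apollonian region `C⁻_α = { z : |1 + z| ≤ α |1 - z| }`. -/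
def Cminus (α : ℝ) : Set ℂ := {z | ‖1 + z‖ ≤ α * ‖1 - z‖}

/-- `C^±_α = C⁺_α ∪ C⁻_α`. -/
def Cpm (α : ℝ) : Set ℂ := Cplus α ∪ Cminus α

/-- One step of the Newton iteration for the matrix sign function: `M ↦ (M + M⁻¹)/2`. -/
noncomputable def newtonStep {n : ℕ} (M : Matrix (Fin n) (Fin n) ℂ) :
    Matrix (Fin n) (Fin n) ℂ :=
  (2 : ℂ)⁻¹ • (M + M⁻¹)


section NewtonAux


noncomputable def gN (z : ℂ) : ℂ := (2:ℂ)⁻¹ * (z + z⁻¹)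

lemma re_pos_of_mem_Cplus {α : ℝ} (hα : α < 1) {z : ℂ} (hz : z ∈ Cplus α) : 0 < z.re := by
  have h : ‖1 - z‖ ≤ α * ‖1 + z‖ := hz
  have hne : (1 : ℂ) + z ≠ 0 := by
    intro h0
    have hz1 : z = -1 := by linear_combination h0
    rw [hz1] at h
    simp at h
  have hb : 0 < ‖1 + z‖ := norm_pos_iff.mpr hne
  have h2 : Complex.normSq (1 - z) < Complex.normSq (1 + z) := by
    rw [← Complex.sq_norm, ← Complex.sq_norm]
    nlinarith [norm_nonneg (1 - z), hb, mul_lt_mul_of_pos_right hα hb]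
  simp only [Complex.normSq_apply, Complex.sub_re, Complex.sub_im, Complex.add_re,
    Complex.add_im, Complex.one_re, Complex.one_im] at h2
  nlinarith

lemma mem_Cminus_iff_neg {α : ℝ} {z : ℂ} : z ∈ Cminus α ↔ -z ∈ Cplus α := by
  simp [Cplus, Cminus, sub_neg_eq_add, ← sub_eq_add_neg]

lemma gN_neg (z : ℂ) : gN (-z) = -gN z := by
  simp [gN]; ring

lemma gN_iter_neg (N : ℕ) (z : ℂ) : gN^[N] (-z) = -(gN^[N] z) := by
  induction N with
  | zero => simp
  | succ N ih => rw [Function.iterate_succ_apply', Function.iterate_succ_apply', ih, gN_neg]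

lemma step_plus {β : ℝ} (hβ : 0 ≤ β) {z : ℂ} (hz : z ≠ 0)
    (h : ‖1 - z‖ ≤ β * ‖1 + z‖) :
    ‖1 - gN z‖ ≤ β ^ 2 * ‖1 + gN z‖ := by
  have h1 : 1 - gN z = -((1 - z) ^ 2 / (2 * z)) := by
    simp only [gN]; field_simp; ring
  have h2 : 1 + gN z = (1 + z) ^ 2 / (2 * z) := by
    simp only [gN]; field_simp; ring
  have hc : 0 < ‖2 * z‖ := norm_pos_iff.mpr (mul_ne_zero two_ne_zero hz)
  rw [h1, h2, norm_neg, norm_div, norm_div, norm_pow, norm_pow, ← mul_div_assoc]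
  gcongr
  nlinarith [norm_nonneg (1 - z), norm_nonneg (1 + z)]

lemma iter_plus {α : ℝ} (hα : α ∈ Set.Ioo (0:ℝ) 1) {z : ℂ} (hz : z ∈ Cplus α) (N : ℕ) :
    gN^[N] z ∈ Cplus (α ^ 2 ^ N) := by
  induction N with
  | zero => simpa using hz
  | succ N ih =>
    have hlt : α ^ 2 ^ N < 1 := pow_lt_one₀ hα.1.le hα.2 (pow_ne_zero N two_ne_zero)
    have hne : gN^[N] z ≠ 0 := by
      intro h0
      have := re_pos_of_mem_Cplus hlt ih
      rw [h0] at this; simp at this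
    rw [Function.iterate_succ_apply']
    show ‖1 - gN (gN^[N] z)‖ ≤ α ^ 2 ^ (N + 1) * ‖1 + gN (gN^[N] z)‖
    rw [show (2:ℕ) ^ (N + 1) = 2 ^ N * 2 from pow_succ 2 N, pow_mul]
    exact step_plus (pow_nonneg hα.1.le _) hne ih

lemma bound_plus {β : ℝ} (hβ1 : β < 1) {z : ℂ} (hz : z ∈ Cplus β) :
    ‖z - 1‖ ≤ 2 * β / (1 - β) := by
  have h : ‖1 - z‖ ≤ β * ‖1 + z‖ := hz
  have hsum : ((1:ℂ) - z) + (1 + z) = 2 := by ring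
  have htri := norm_add_le (1 - z) (1 + z)
  rw [hsum, Complex.norm_two] at htri
  have hβ0 : 0 ≤ β := by
    by_contra hneg
    push_neg at hneg
    have ha0 : ‖1 - z‖ = 0 :=
      le_antisymm (h.trans (mul_nonpos_iff.mpr (Or.inr ⟨hneg.le, norm_nonneg _⟩)))
        (norm_nonneg _)
    have hz1 : z = 1 := by
      have h10 := norm_eq_zero.mp ha0
      linear_combination -h10
    rw [hz1] at h
    norm_num [Complex.norm_two] at h
    linarith
  have h2 : ‖1 + z‖ ≤ 2 + ‖1 - z‖ := by
    have he : (1 : ℂ) + z = 2 - (1 - z) := by ring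
    calc ‖1 + z‖ = ‖(2:ℂ) - (1 - z)‖ := by rw [← he]
    _ ≤ ‖(2:ℂ)‖ + ‖1 - z‖ := norm_sub_le _ _
    _ = 2 + ‖1 - z‖ := by rw [Complex.norm_two]
  rw [norm_sub_rev]
  rw [le_div_iff₀ (by linarith)]
  nlinarith [norm_nonneg (1 - z)]



lemma enorm_eq_norm {n : ℕ} (v : Fin n → ℂ) :
    euclidEnorm v = ‖(WithLp.equiv 2 (Fin n → ℂ)).symm v‖ := by
  rw [EuclideanSpace.norm_eq]
  simp [euclidEnorm]

lemma specNorm_eq {m n : ℕ} (A : Matrix (Fin m) (Fin n) ℂ) :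
    specNorm A = ‖LinearMap.toContinuousLinearMap (Matrix.toEuclideanLin A)‖ := by
  set f := LinearMap.toContinuousLinearMap (Matrix.toEuclideanLin A) with hf
  have hval : ∀ v : Fin n → ℂ,
      euclidEnorm (A.mulVec v) = ‖f ((WithLp.equiv 2 (Fin n → ℂ)).symm v)‖ := by
    intro v
    rw [enorm_eq_norm]
    congr 1
  have hmem : ∀ s ∈ {s | ∃ v : Fin n → ℂ, euclidEnorm v = 1 ∧ s = euclidEnorm (A.mulVec v)}, s ≤ ‖f‖ := by
    rintro s ⟨v, hv, rfl⟩
    rw [hval]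
    calc ‖f ((WithLp.equiv 2 (Fin n → ℂ)).symm v)‖
        ≤ ‖f‖ * ‖(WithLp.equiv 2 (Fin n → ℂ)).symm v‖ := f.le_opNorm _
      _ = ‖f‖ := by rw [← enorm_eq_norm, hv, mul_one]
  refine le_antisymm (Real.sSup_le hmem (norm_nonneg _)) ?_
  refine f.opNorm_le_bound (Real.sSup_nonneg ?_) ?_
  · rintro s ⟨v, hv, rfl⟩
    exact Real.sqrt_nonneg _
  · intro x
    by_cases hx : x = 0
    · simp [hx]
    have hxn : (0:ℝ) < ‖x‖ := norm_pos_iff.mpr hx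
    set y : EuclideanSpace ℂ (Fin n) := ((‖x‖ : ℂ))⁻¹ • x with hy
    set u : Fin n → ℂ := WithLp.equiv 2 (Fin n → ℂ) y with hu
    have hsy : (WithLp.equiv 2 (Fin n → ℂ)).symm u = y := (WithLp.equiv 2 _).symm_apply_apply y
    have hyn : ‖y‖ = 1 := by
      rw [hy, norm_smul]
      simp [Complex.norm_real, abs_of_nonneg hxn.le, inv_mul_cancel₀ hxn.ne']
    have hu1 : euclidEnorm u = 1 := by rw [enorm_eq_norm, hsy, hyn]
    have hmem2 : euclidEnorm (A.mulVec u) ∈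
        {s | ∃ v : Fin n → ℂ, euclidEnorm v = 1 ∧ s = euclidEnorm (A.mulVec v)} := ⟨u, hu1, rfl⟩
    have hle := le_csSup ⟨‖f‖, hmem⟩ hmem2
    have hfy : euclidEnorm (A.mulVec u) = ‖x‖⁻¹ * ‖f x‖ := by
      rw [hval, hsy, hy, map_smul, norm_smul]
      simp [Complex.norm_real, abs_of_nonneg hxn.le]
    rw [hfy] at hle
    calc ‖f x‖ = (‖x‖⁻¹ * ‖f x‖) * ‖x‖ := by field_simp
      _ ≤ specNorm A * ‖x‖ := mul_le_mul_of_nonneg_right hle hxn.le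

lemma specNorm_nonneg {m n : ℕ} (A : Matrix (Fin m) (Fin n) ℂ) : 0 ≤ specNorm A := by
  rw [specNorm_eq]; exact norm_nonneg _

lemma specNorm_mul_le {m n p : ℕ} (A : Matrix (Fin m) (Fin n) ℂ) (B : Matrix (Fin n) (Fin p) ℂ) :
    specNorm (A * B) ≤ specNorm A * specNorm B := by
  rw [specNorm_eq, specNorm_eq, specNorm_eq]
  have : LinearMap.toContinuousLinearMap (Matrix.toEuclideanLin (A * B)) =
      (LinearMap.toContinuousLinearMap (Matrix.toEuclideanLin A)).comp
        (LinearMap.toContinuousLinearMap (Matrix.toEuclideanLin B)) := by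
    ext x
    simp [Matrix.toEuclideanLin_apply, Matrix.mulVec_mulVec]
  rw [this]
  exact ContinuousLinearMap.opNorm_comp_le _ _

lemma specNorm_diagonal_le {n : ℕ} (c : Fin n → ℂ) (b : ℝ) (hb : 0 ≤ b)
    (h : ∀ i, ‖c i‖ ≤ b) : specNorm (Matrix.diagonal c) ≤ b := by
  rw [specNorm_eq]
  refine ContinuousLinearMap.opNorm_le_bound _ hb ?_
  intro x
  rw [EuclideanSpace.norm_eq, EuclideanSpace.norm_eq]
  rw [← Real.sqrt_sq hb, ← Real.sqrt_mul (sq_nonneg b)]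
  apply Real.sqrt_le_sqrt
  rw [Finset.mul_sum]
  apply Finset.sum_le_sum
  intro i _
  have hx : (LinearMap.toContinuousLinearMap (Matrix.toEuclideanLin (Matrix.diagonal c))) x i
      = c i * x i := by
    simp [Matrix.toEuclideanLin_apply, Matrix.mulVec_diagonal]
  rw [hx]
  rw [norm_mul]
  rw [mul_pow]
  have h1 : ‖c i‖ ^ 2 ≤ b ^ 2 := by
    have := h i
    nlinarith [norm_nonneg (c i)]
  nlinarith [norm_nonneg (x i), sq_nonneg (x i : ℂ).re]



lemma newton_conj_isUnit {n : ℕ} (V : Matrix (Fin n) (Fin n) ℂ) (hV : IsUnit V)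
    (e : Fin n → ℂ) (he : ∀ i, e i ≠ 0) : IsUnit (V * Matrix.diagonal e * V⁻¹) := by
  have hD : IsUnit (Matrix.diagonal e) := by
    rw [Matrix.isUnit_iff_isUnit_det, Matrix.det_diagonal, isUnit_iff_ne_zero]
    exact Finset.prod_ne_zero_iff.mpr fun i _ => he i
  exact (hV.mul hD).mul (Matrix.isUnit_nonsing_inv_iff.mpr hV)

lemma newton_conj_inv {n : ℕ} (V : Matrix (Fin n) (Fin n) ℂ) (hV : IsUnit V)
    (e : Fin n → ℂ) (he : ∀ i, e i ≠ 0) :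
    (V * Matrix.diagonal e * V⁻¹)⁻¹ = V * Matrix.diagonal (fun i => (e i)⁻¹) * V⁻¹ := by
  have hVd : IsUnit V.det := (Matrix.isUnit_iff_isUnit_det V).mp hV
  apply Matrix.inv_eq_right_inv
  have hVV : V⁻¹ * V = 1 := Matrix.nonsing_inv_mul V hVd
  have hVV' : V * V⁻¹ = 1 := Matrix.mul_nonsing_inv V hVd
  have hDD : Matrix.diagonal e * Matrix.diagonal (fun i => (e i)⁻¹) = 1 := by
    rw [Matrix.diagonal_mul_diagonal]
    rw [show (fun i => e i * (e i)⁻¹) = fun _ => (1:ℂ) from funext fun i => mul_inv_cancel₀ (he i)]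
    exact Matrix.diagonal_one
  calc V * Matrix.diagonal e * V⁻¹ * (V * Matrix.diagonal (fun i => (e i)⁻¹) * V⁻¹)
      = V * Matrix.diagonal e * (V⁻¹ * V) * Matrix.diagonal (fun i => (e i)⁻¹) * V⁻¹ := by
        simp only [Matrix.mul_assoc]
    _ = V * (Matrix.diagonal e * Matrix.diagonal (fun i => (e i)⁻¹)) * V⁻¹ := by
        rw [hVV, Matrix.mul_one]; simp only [Matrix.mul_assoc]
    _ = 1 := by rw [hDD, Matrix.mul_one, hVV']

lemma newton_conj_step {n : ℕ} (V : Matrix (Fin n) (Fin n) ℂ) (hV : IsUnit V)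
    (e : Fin n → ℂ) (he : ∀ i, e i ≠ 0) :
    newtonStep (V * Matrix.diagonal e * V⁻¹) =
      V * Matrix.diagonal (fun i => gN (e i)) * V⁻¹ := by
  rw [newtonStep, newton_conj_inv V hV e he]
  have hg : Matrix.diagonal (fun i => gN (e i)) =
      (2:ℂ)⁻¹ • (Matrix.diagonal e + Matrix.diagonal (fun i => (e i)⁻¹)) := by
    rw [Matrix.diagonal_add, ← Matrix.diagonal_smul]
    rfl
  rw [hg]
  simp only [Matrix.mul_add, Matrix.add_mul, Matrix.mul_smul, Matrix.smul_mul]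

end NewtonAux



/-- (Exact-arithmetic convergence of the Newton iteration for the matrix sign function.)
Let `A = V D V⁻¹` with `V` invertible and `D = diagonal d`, with every `d i` having nonzero real
part and lying in `C^±_α` for some `α ∈ (0,1)`.  Let `S = V·sgn(D)·V⁻¹`.  Then every Newton
iterate `A_k` is invertible, and for every `N`,
`‖A_N − S‖ ≤ (4 α^{2^N}/(1 − α^{2^N}))·‖V‖·‖V⁻¹‖`. -/
theorem newton_exact_convergence {n : ℕ} (A V : Matrix (Fin n) (Fin n) ℂ)
    (d : Fin n → ℂ) (α : ℝ) (hα : α ∈ Set.Ioo (0 : ℝ) 1)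
    (hV : IsUnit V) (hA : A = V * Matrix.diagonal d * V⁻¹)
    (hd : ∀ i, (d i).re ≠ 0 ∧ d i ∈ Cpm α) :
    (∀ k : ℕ, IsUnit (newtonStep^[k] A)) ∧
    ∀ N : ℕ,
      specNorm (newtonStep^[N] A -
          V * Matrix.diagonal (fun i => if 0 < (d i).re then 1 else -1) * V⁻¹)
        ≤ 4 * α ^ (2 ^ N) / (1 - α ^ (2 ^ N)) * (specNorm V * specNorm V⁻¹) := by
  have hs : ∀ i, (∀ N : ℕ, gN^[N] (d i) ≠ 0) ∧
      (∀ N : ℕ, ‖gN^[N] (d i) - (if 0 < (d i).re then 1 else -1)‖ ≤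
        2 * α ^ 2 ^ N / (1 - α ^ 2 ^ N)) := by
    intro i
    have hlt : ∀ N : ℕ, α ^ 2 ^ N < 1 := fun N =>
      pow_lt_one₀ hα.1.le hα.2 (pow_ne_zero N two_ne_zero)
    rcases (hd i).2 with hp | hm
    · have hre : 0 < (d i).re := re_pos_of_mem_Cplus hα.2 hp
      refine ⟨fun N h0 => ?_, fun N => ?_⟩
      · have := re_pos_of_mem_Cplus (hlt N) (iter_plus hα hp N)
        rw [h0] at this; simp at this
      · rw [if_pos hre]
        exact bound_plus (hlt N) (iter_plus hα hp N)
    · have hmem : -(d i) ∈ Cplus α := mem_Cminus_iff_neg.mp hm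
      have hre : (d i).re < 0 := by
        have := re_pos_of_mem_Cplus hα.2 hmem
        simpa using this
      refine ⟨fun N h0 => ?_, fun N => ?_⟩
      · have := re_pos_of_mem_Cplus (hlt N) (iter_plus hα hmem N)
        rw [gN_iter_neg, h0] at this; simp at this
      · rw [if_neg (by intro h; linarith)]
        have h1 := iter_plus hα hmem N
        rw [gN_iter_neg] at h1
        have hb := bound_plus (hlt N) h1
        calc ‖gN^[N] (d i) - (-1)‖
            = ‖-(gN^[N] (d i)) - 1‖ := by
              rw [show gN^[N] (d i) - (-1) = -(-(gN^[N] (d i)) - 1) from by ring,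
                norm_neg]
          _ ≤ 2 * α ^ 2 ^ N / (1 - α ^ 2 ^ N) := hb
  have hne : ∀ k : ℕ, ∀ i, gN^[k] (d i) ≠ 0 := fun k i => (hs i).1 k
  have hiter : ∀ k : ℕ, newtonStep^[k] A =
      V * Matrix.diagonal (fun i => gN^[k] (d i)) * V⁻¹ := by
    intro k
    induction k with
    | zero => simpa using hA
    | succ k ih =>
      rw [Function.iterate_succ_apply', ih, newton_conj_step V hV _ (hne k)]
      have he : (fun i => gN (gN^[k] (d i))) = fun i => gN^[k + 1] (d i) :=
        funext fun i => (Function.iterate_succ_apply' gN k (d i)).symm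
      rw [he]
  constructor
  · intro k
    rw [hiter k]
    exact newton_conj_isUnit V hV _ (hne k)
  · intro N
    have hβlt : α ^ 2 ^ N < 1 := pow_lt_one₀ hα.1.le hα.2 (pow_ne_zero N two_ne_zero)
    have hβ0 : 0 ≤ α ^ 2 ^ N := pow_nonneg hα.1.le _
    set b : ℝ := 2 * α ^ 2 ^ N / (1 - α ^ 2 ^ N) with hbdef
    have hb0 : 0 ≤ b := by
      apply div_nonneg (by linarith) (by linarith)
    have hdiff : newtonStep^[N] A -
        V * Matrix.diagonal (fun i => if 0 < (d i).re then (1:ℂ) else -1) * V⁻¹ =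
        V * Matrix.diagonal
          (fun i => gN^[N] (d i) - (if 0 < (d i).re then (1:ℂ) else -1)) * V⁻¹ := by
      rw [hiter N, ← Matrix.sub_mul, ← Matrix.mul_sub, Matrix.diagonal_sub]
    rw [hdiff]
    have hdle : specNorm (Matrix.diagonal
        (fun i => gN^[N] (d i) - (if 0 < (d i).re then (1:ℂ) else -1))) ≤ b :=
      specNorm_diagonal_le _ b hb0 fun i => (hs i).2 N
    have h4 : 4 * α ^ 2 ^ N / (1 - α ^ 2 ^ N) = 2 * b := by
      rw [hbdef]; ring
    rw [h4]
    calc specNorm (V * Matrix.diagonal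
          (fun i => gN^[N] (d i) - (if 0 < (d i).re then (1:ℂ) else -1)) * V⁻¹)
        ≤ specNorm (V * Matrix.diagonal
            (fun i => gN^[N] (d i) - (if 0 < (d i).re then (1:ℂ) else -1))) *
            specNorm V⁻¹ := specNorm_mul_le _ _
      _ ≤ (specNorm V * b) * specNorm V⁻¹ := by
          refine mul_le_mul_of_nonneg_right ?_ (specNorm_nonneg _)
          calc specNorm (V * Matrix.diagonal _)
              ≤ specNorm V * specNorm (Matrix.diagonal _) := specNorm_mul_le _ _
            _ ≤ specNorm V * b := mul_le_mul_of_nonneg_left hdle (specNorm_nonneg _)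
      _ ≤ 2 * b * (specNorm V * specNorm V⁻¹) := by
          nlinarith [specNorm_nonneg V, specNorm_nonneg V⁻¹,
            mul_nonneg (mul_nonneg (specNorm_nonneg V) hb0) (specNorm_nonneg V⁻¹)]
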